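/- Let α and Ω be standard Borel spaces and ρ a Borel probability measure on α × Ω with disintegration (ρ_a)_{a∈α} over the first coordinate. Let T : α × Ω → α × Ω be measurable of the form T(a,ω) = (g(a), h(a,ω)), where g : α → α is a measurable bijection with measurable inverse, and assume ρ is T-invariant and T-ergodic. If for ρ.fst-almost every a the conditional measure ρ_a is purely atomic, then there exist δ₀ > 0 and a natural number k with δ₀ = 1/k such that for ρ.fst-almost every a, every atom of ρ_a has measure exactly δ₀ and ρ_a has exactly k atoms. -/

import Mathlib

open MeasureTheory

/-- A measure on `Ω` is purely atomic if it is carried by a countable set. -/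
def PurelyAtomic {Ω : Type*} [MeasurableSpace Ω] (μ : Measure Ω) : Prop :=
  ∃ S : Set Ω, S.Countable ∧ μ Sᶜ = 0

open ProbabilityTheory

lemma measurable_phi {α Ω : Type*} [MeasurableSpace α] [StandardBorelSpace α] [Nonempty α]
    [MeasurableSpace Ω] [StandardBorelSpace Ω] [Nonempty Ω]
    (ρ : Measure (α × Ω)) [IsFiniteMeasure ρ] :
    Measurable (fun p : α × Ω => ρ.condKernel p.1 {p.2}) := by
  let κ' : Kernel (α × Ω) Ω := Kernel.comap ρ.condKernel Prod.fst measurable_fst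
  let f := embeddingReal Ω
  have hf := measurableEmbedding_embeddingReal Ω
  have ht : MeasurableSet {q : (α × Ω) × Ω | f q.2 = f q.1.2} :=
    measurableSet_eq_fun (hf.measurable.comp measurable_snd)
      (hf.measurable.comp (measurable_snd.comp measurable_fst))
  have := Kernel.measurable_kernel_prodMk_left (κ := κ') ht
  convert this using 1
  ext p
  congr 1
  ext x
  simp only [Set.mem_preimage, Set.mem_setOf_eq, Set.mem_singleton_iff]
  exact ⟨fun hx => hx ▸ rfl, fun hx => hf.injective hx⟩

lemma condKernel_push {α Ω : Type*} [MeasurableSpace α] [StandardBorelSpace α] [Nonempty α]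
    [MeasurableSpace Ω] [StandardBorelSpace Ω] [Nonempty Ω]
    (ρ : Measure (α × Ω)) [IsProbabilityMeasure ρ]
    (g : α ≃ᵐ α) (h : α × Ω → Ω) (hh : Measurable h)
    (T : α × Ω → α × Ω) (hT : T = fun p => (g p.1, h p)) (hTm : Measurable T)
    (hinv : Measure.map T ρ = ρ)
    (hgfst : Measure.map g ρ.fst = ρ.fst) :
    ∀ᵐ a ∂ρ.fst, ρ.condKernel (g a) = Measure.map (fun ω => h (a, ω)) (ρ.condKernel a) := by
  have hmk : ∀ b : α, Measurable (fun ω => h (b, ω)) := fun b => hh.comp measurable_prodMk_left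
  let κ₁ : Kernel α Ω :=
    { toFun := fun b => Measure.map (fun ω => h (g.symm b, ω)) (ρ.condKernel (g.symm b))
      measurable' := by
        apply Measure.measurable_of_measurable_coe
        intro s hs
        simp_rw [Measure.map_apply (hmk _) hs]
        have hmeas : Measurable fun a => ρ.condKernel a (Prod.mk a ⁻¹' (h ⁻¹' s)) :=
          Kernel.measurable_kernel_prodMk_left (hh hs)
        exact hmeas.comp g.symm.measurable }
  have hκ₁_apply : ∀ b, κ₁ b = Measure.map (fun ω => h (g.symm b, ω)) (ρ.condKernel (g.symm b)) :=
    fun b => rfl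
  have : IsMarkovKernel κ₁ := by
    refine ⟨fun b => ⟨?_⟩⟩
    rw [hκ₁_apply, Measure.map_apply (hmk _) MeasurableSet.univ]
    simp
  have hcomp : ρ = ρ.fst ⊗ₘ κ₁ := by
    ext s hs
    rw [Measure.compProd_apply hs]
    conv_rhs => rw [← hgfst]
    rw [lintegral_map (Kernel.measurable_kernel_prodMk_left hs) g.measurable]
    have hpt : ∀ a, κ₁ (g a) (Prod.mk (g a) ⁻¹' s) = ρ.condKernel a (Prod.mk a ⁻¹' (T ⁻¹' s)) := by
      intro a
      rw [hκ₁_apply, Measure.map_apply (hmk _) (measurable_prodMk_left hs)]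
      simp only [g.symm_apply_apply]
      congr 1
      ext ω
      simp [hT]
    simp_rw [hpt]
    rw [← Measure.compProd_apply (hTm hs), ρ.disintegrate ρ.condKernel,
      ← Measure.map_apply hTm hs, hinv]
  have huniq : ∀ᵐ b ∂ρ.fst, κ₁ b = ρ.condKernel b :=
    eq_condKernel_of_measure_eq_compProd κ₁ hcomp
  have hgq : Measure.QuasiMeasurePreserving g ρ.fst ρ.fst :=
    (MeasurePreserving.mk g.measurable hgfst).quasiMeasurePreserving
  filter_upwards [hgq.ae huniq] with a ha
  rw [← ha, hκ₁_apply]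
  simp

/-- If a fibered map `T(a,ω) = (g a, h (a,ω))`, with `g` a measurable bijection with measurable
inverse, preserves a probability measure `ρ` on a product of standard Borel spaces and is
ergodic for `ρ`, and if the Rokhlin conditional measures `ρ_a` are purely atomic for
`ρ.fst`-a.e. `a`, then there are `δ₀ > 0` and `k ∈ ℕ` with `δ₀ = 1/k` such that for
`ρ.fst`-a.e. `a` every atom of `ρ_a` has weight exactly `δ₀` and `ρ_a` has exactly `k` atoms. -/
theorem stmt9
    {α Ω : Type*}
    [MeasurableSpace α] [StandardBorelSpace α] [Nonempty α]
    [MeasurableSpace Ω] [StandardBorelSpace Ω] [Nonempty Ω]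
    (ρ : Measure (α × Ω)) [IsProbabilityMeasure ρ]
    (g : α ≃ᵐ α) (h : α × Ω → Ω) (hh : Measurable h)
    (T : α × Ω → α × Ω) (hT : T = fun p => (g p.1, h p))
    (hinv : Measure.map T ρ = ρ)
    (herg : ∀ E : Set (α × Ω), MeasurableSet E → T ⁻¹' E = E → ρ E = 0 ∨ ρ E = 1)
    (hatomic : ∀ᵐ a ∂ρ.fst, PurelyAtomic (ρ.condKernel a)) :
    ∃ δ₀ : ENNReal, 0 < δ₀ ∧ ∃ k : ℕ, δ₀ = 1 / (k : ENNReal) ∧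
      ∀ᵐ a ∂ρ.fst,
        (∀ ω : Ω, ρ.condKernel a {ω} ≠ 0 → ρ.condKernel a {ω} = δ₀) ∧
        {ω : Ω | ρ.condKernel a {ω} ≠ 0}.Finite ∧
        {ω : Ω | ρ.condKernel a {ω} ≠ 0}.ncard = k := by
  classical
  have hTm : Measurable T := by
    rw [hT]; exact (g.measurable.comp measurable_fst).prodMk hh
  have hmp : MeasurePreserving T ρ ρ := ⟨hTm, hinv⟩
  have hgfst : Measure.map g ρ.fst = ρ.fst := by
    have h1 : Measure.map g ρ.fst = Measure.map (g ∘ Prod.fst) ρ :=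
      Measure.map_map g.measurable measurable_fst
    have h2 : (g ∘ Prod.fst : α × Ω → α) = Prod.fst ∘ T := by
      ext p; simp [hT]
    rw [h1, h2, ← Measure.map_map measurable_fst hTm, hinv]
    rfl
  set φ : α × Ω → ENNReal := fun p => ρ.condKernel p.1 {p.2} with hφdef
  have hφ : Measurable φ := measurable_phi ρ
  have hφle : ∀ p, φ p ≤ 1 := fun p => prob_le_one
  set E : ENNReal → Set (α × Ω) := fun δ => {p | δ < φ p} with hEdef
  have hEmeas : ∀ δ, MeasurableSet (E δ) := fun δ => hφ measurableSet_Ioi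
  -- a.e. p, φ p ≤ φ (T p)
  have hpush := condKernel_push ρ g h hh T hT hTm hinv hgfst
  have hfstmp : MeasurePreserving Prod.fst ρ ρ.fst := ⟨measurable_fst, rfl⟩
  have hge : ∀ᵐ p ∂ρ, φ p ≤ φ (T p) := by
    filter_upwards [hfstmp.quasiMeasurePreserving.ae hpush] with p hp
    have : φ (T p) = ρ.condKernel (g p.1) {h p} := by simp [hφdef, hT]
    rw [this, hp, Measure.map_apply (f := fun ω => h (p.1, ω)) (hh.comp measurable_prodMk_left) (measurableSet_singleton _)]
    apply measure_mono
    intro x hx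
    simp only [Set.mem_singleton_iff] at hx
    simp [hx]
  -- ergodic dichotomy for a.e.-invariant sets
  have herg' : ∀ E' : Set (α × Ω), MeasurableSet E' → (T ⁻¹' E' : Set (α × Ω)) =ᵐ[ρ] E' →
      ρ E' = 0 ∨ ρ E' = 1 := by
    have hpre : PreErgodic T ρ := by
      constructor
      intro s hs hinv'
      rcases herg s hs hinv' with h0 | h1
      · exact Filter.eventuallyConst_set'.2 (Or.inl (ae_eq_empty.2 h0))
      · exact Filter.eventuallyConst_set'.2
          (Or.inr (ae_eq_univ.2 ((prob_compl_eq_zero_iff₀ hs.nullMeasurableSet).2 h1)))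
    have herg2 : Ergodic T ρ := ⟨hmp, hpre⟩
    have hqe := herg2.quasiErgodic
    intro E' hE' hae
    rcases hqe.ae_empty_or_univ₀ hE'.nullMeasurableSet hae with h0 | h1
    · exact Or.inl (ae_eq_empty.1 h0)
    · exact Or.inr ((prob_compl_eq_zero_iff₀ hE'.nullMeasurableSet).1 (ae_eq_univ.1 h1))
  -- invariance of E δ up to null sets
  have hdich : ∀ δ, ρ (E δ) = 0 ∨ ρ (E δ) = 1 := by
    intro δ
    refine herg' (E δ) (hEmeas δ) ?_
    have hsub : ρ (E δ \ T ⁻¹' E δ) = 0 := by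
      refine measure_mono_null ?_ (ae_iff.1 hge)
      intro p hp
      simp only [Set.mem_diff, Set.mem_preimage, hEdef, Set.mem_setOf_eq] at hp ⊢
      exact fun hle => hp.2 (lt_of_lt_of_le hp.1 hle)
    have heq : ρ (T ⁻¹' E δ) = ρ (E δ) := hmp.measure_preimage (hEmeas δ).nullMeasurableSet
    have h1 : ρ (E δ ∩ T ⁻¹' E δ) + ρ (E δ \ T ⁻¹' E δ) = ρ (E δ) :=
      measure_inter_add_diff _ (hTm (hEmeas δ))
    have h2 : ρ (T ⁻¹' E δ ∩ E δ) + ρ (T ⁻¹' E δ \ E δ) = ρ (T ⁻¹' E δ) :=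
      measure_inter_add_diff _ (hEmeas δ)
    rw [hsub, add_zero] at h1
    rw [Set.inter_comm, h1, heq] at h2
    have hsub2 : ρ (T ⁻¹' E δ \ E δ) = 0 := by
      have hfin : ρ (E δ) ≠ ⊤ := measure_ne_top ρ _
      nth_rewrite 2 [← add_zero (ρ (E δ))] at h2
      exact (ENNReal.add_right_inj hfin).1 h2
    exact (MeasureTheory.ae_eq_set).2 ⟨hsub2, hsub⟩
  -- disintegration of measures of sets
  have hsec : ∀ E' : Set (α × Ω), MeasurableSet E' →
      ρ E' = ∫⁻ a, ρ.condKernel a (Prod.mk a ⁻¹' E') ∂ρ.fst := by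
    intro E' hE'
    conv_lhs => rw [← ρ.disintegrate ρ.condKernel]
    rw [Measure.compProd_apply hE']
  have hnullsec : ∀ E' : Set (α × Ω), MeasurableSet E' → ρ E' = 0 →
      ∀ᵐ a ∂ρ.fst, ρ.condKernel a (Prod.mk a ⁻¹' E') = 0 := by
    intro E' hE' h0
    rw [hsec E' hE'] at h0
    exact (lintegral_eq_zero_iff (Kernel.measurable_kernel_prodMk_left hE')).1 h0
  -- ρ (E 0) = 1
  have hE0 : ρ (E 0) = 1 := by
    rw [hsec _ (hEmeas 0)]
    have : ∀ᵐ a ∂ρ.fst, ρ.condKernel a (Prod.mk a ⁻¹' E 0) = 1 := by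
      filter_upwards [hatomic] with a ⟨S, hScnt, hSnull⟩
      have hcompl : ρ.condKernel a (Prod.mk a ⁻¹' E 0)ᶜ = 0 := by
        have hceq : (Prod.mk a ⁻¹' E 0)ᶜ = {ω | ρ.condKernel a {ω} = 0} := by
          ext ω; simp [hEdef, hφdef, pos_iff_ne_zero]
        rw [hceq]
        have hsplit : {ω | ρ.condKernel a {ω} = 0} ⊆
            ({ω | ρ.condKernel a {ω} = 0} ∩ S) ∪ Sᶜ := by
          intro ω hω
          by_cases hωS : ω ∈ S
          · exact Or.inl ⟨hω, hωS⟩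
          · exact Or.inr hωS
        refine measure_mono_null hsplit (measure_union_null ?_ hSnull)
        have hcnt : ({ω | ρ.condKernel a {ω} = 0} ∩ S).Countable := hScnt.mono Set.inter_subset_right
        have := (measure_biUnion_null_iff (μ := ρ.condKernel a) hcnt).2
          (fun x hx => hx.1)
        rwa [Set.biUnion_of_singleton] at this
      have := measure_add_measure_compl (μ := ρ.condKernel a)
        (s := Prod.mk a ⁻¹' E 0) (measurable_prodMk_left (hEmeas 0))
      rw [hcompl, add_zero] at this
      rw [this]; simp
    rw [lintegral_congr_ae this]
    simp
  -- the set of δ with ρ (E δ) = 1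
  set S01 : Set ENNReal := {δ | ρ (E δ) = 1} with hS01def
  have hdc : ∀ δ δ' : ENNReal, δ ≤ δ' → δ' ∈ S01 → δ ∈ S01 := by
    intro δ δ' hle hδ'
    have hsub : E δ' ⊆ E δ := fun p hp => lt_of_le_of_lt hle hp
    have := measure_mono (μ := ρ) hsub
    rw [hδ'] at this
    exact le_antisymm prob_le_one this
  have hS01le1 : ∀ δ ∈ S01, δ ≤ 1 := by
    intro δ hδ
    by_contra hgt
    push_neg at hgt
    have : E δ = ∅ := by
      ext p
      simp only [hEdef, Set.mem_setOf_eq, Set.mem_empty_iff_false, iff_false, not_lt]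
      exact le_trans (hφle p) hgt.le
    rw [hS01def, Set.mem_setOf_eq, this] at hδ
    simp at hδ
  -- a positive element of S01
  have hposmem : ∃ n : ℕ, ((n : ENNReal) + 1)⁻¹ ∈ S01 := by
    have hunion : E 0 = ⋃ n : ℕ, E ((n : ENNReal) + 1)⁻¹ := by
      ext p
      simp only [hEdef, Set.mem_setOf_eq, Set.mem_iUnion]
      constructor
      · intro hp
        obtain ⟨n, hn⟩ := ENNReal.exists_inv_nat_lt (pos_iff_ne_zero.1 hp)
        refine ⟨n, show ((n : ENNReal) + 1)⁻¹ < φ p from lt_of_le_of_lt ?_ hn⟩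
        gcongr
        exact le_add_of_nonneg_right zero_le_one
      · rintro ⟨n, hn⟩
        exact lt_of_le_of_lt (zero_le) (show ((n : ENNReal) + 1)⁻¹ < φ p from hn)
    have hmono : Monotone (fun n : ℕ => E ((n : ENNReal) + 1)⁻¹) := by
      intro m n hmn p hp
      have hp' : ((m : ENNReal) + 1)⁻¹ < φ p := hp
      show ((n : ENNReal) + 1)⁻¹ < φ p
      refine lt_of_le_of_lt ?_ hp'
      gcongr

    have hsup : (⨆ n : ℕ, ρ (E ((n : ENNReal) + 1)⁻¹)) = 1 := by
      rw [← Directed.measure_iUnion (hmono.directed_le), ← hunion, hE0]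
    by_contra hno
    push_neg at hno
    have hzero : ∀ n : ℕ, ρ (E ((n : ENNReal) + 1)⁻¹) = 0 := by
      intro n
      rcases hdich ((n : ENNReal) + 1)⁻¹ with h0 | h1
      · exact h0
      · exact absurd h1 (hno n)
    simp only [hzero] at hsup
    simp at hsup
  obtain ⟨n₀, hn₀⟩ := hposmem
  set δ₀ : ENNReal := sSup S01 with hδ₀def
  have hinvpos : ∀ n : ℕ, (0 : ENNReal) < ((n : ENNReal) + 1)⁻¹ := fun n =>
    ENNReal.inv_pos.2 (ENNReal.add_ne_top.2 ⟨ENNReal.natCast_ne_top _, ENNReal.one_ne_top⟩)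
  have hδ₀pos : 0 < δ₀ := lt_of_lt_of_le (hinvpos n₀) (le_sSup hn₀)
  have hδ₀le1 : δ₀ ≤ 1 := sSup_le hS01le1
  have hδ₀ne_top : δ₀ ≠ ⊤ := ne_top_of_le_ne_top ENNReal.one_ne_top hδ₀le1
  have hδ₀ne0 : δ₀ ≠ 0 := hδ₀pos.ne'
  -- upper bound on atoms
  have hub : ∀ᵐ a ∂ρ.fst, ∀ ω : Ω, ρ.condKernel a {ω} ≤ δ₀ := by
    have hn : ∀ n : ℕ, ∀ᵐ a ∂ρ.fst, ∀ ω : Ω,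
        ρ.condKernel a {ω} ≤ δ₀ + ((n : ENNReal) + 1)⁻¹ := by
      intro n
      set δ := δ₀ + ((n : ENNReal) + 1)⁻¹ with hδdef
      have hδgt : δ₀ < δ := ENNReal.lt_add_right hδ₀ne_top (hinvpos n).ne'
      have hδ0 : ρ (E δ) = 0 := by
        rcases hdich δ with h0 | h1
        · exact h0
        · exact absurd (le_sSup (show δ ∈ S01 from h1)) (not_le.2 hδgt)
      filter_upwards [hnullsec (E δ) (hEmeas δ) hδ0] with a ha ω
      by_contra hgt
      push_neg at hgt
      have hmem : ω ∈ Prod.mk a ⁻¹' E δ := hgt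
      have := measure_mono (μ := ρ.condKernel a) (Set.singleton_subset_iff.2 hmem)
      rw [ha] at this
      exact absurd (le_antisymm this (zero_le)) (ne_of_gt (lt_trans (lt_of_le_of_lt (zero_le) hδgt) hgt))
    rw [← ae_all_iff] at hn
    filter_upwards [hn] with a ha ω
    refine ENNReal.le_of_forall_pos_le_add fun ε hε _ => ?_
    obtain ⟨m, hm⟩ := ENNReal.exists_inv_nat_lt
      (show (ε : ENNReal) ≠ 0 from ENNReal.coe_ne_zero.2 hε.ne')
    calc ρ.condKernel a {ω} ≤ δ₀ + ((m : ENNReal) + 1)⁻¹ := ha m ω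
      _ ≤ δ₀ + (m : ENNReal)⁻¹ :=
          add_le_add le_rfl (ENNReal.inv_le_inv.2 (le_add_of_nonneg_right zero_le_one))
      _ ≤ δ₀ + ε := add_le_add le_rfl hm.le
  -- lower bound on atoms
  have hlb : ∀ᵐ a ∂ρ.fst, ∀ ω : Ω, ρ.condKernel a {ω} ≠ 0 → δ₀ ≤ ρ.condKernel a {ω} := by
    have hn : ∀ n : ℕ, ∀ᵐ a ∂ρ.fst, ∀ ω : Ω, ρ.condKernel a {ω} ≠ 0 →
        δ₀ - ((n : ENNReal) + 1)⁻¹ ≤ ρ.condKernel a {ω} := by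
      intro n
      set δ := δ₀ - ((n : ENNReal) + 1)⁻¹ with hδdef
      have hδmem : δ ∈ S01 := by
        have hlt : δ < δ₀ := ENNReal.sub_lt_self hδ₀ne_top hδ₀ne0 (hinvpos n).ne'
        obtain ⟨δ', hδ'S, hδ'gt⟩ := lt_sSup_iff.1 hlt
        exact hdc δ δ' hδ'gt.le hδ'S
      have hcompl0 : ρ (E δ)ᶜ = 0 :=
        (prob_compl_eq_zero_iff₀ (hEmeas δ).nullMeasurableSet).2 hδmem
      filter_upwards [hnullsec (E δ)ᶜ (hEmeas δ).compl hcompl0] with a ha ω hω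
      by_contra hlt
      push_neg at hlt
      have hmem : ω ∈ Prod.mk a ⁻¹' (E δ)ᶜ := by
        simp only [Set.mem_preimage, Set.mem_compl_iff, hEdef, Set.mem_setOf_eq, not_lt]
        exact hlt.le
      have := measure_mono (μ := ρ.condKernel a) (Set.singleton_subset_iff.2 hmem)
      rw [ha] at this
      exact hω (le_antisymm this (zero_le))
    rw [← ae_all_iff] at hn
    filter_upwards [hn] with a ha ω hω
    refine ENNReal.le_of_forall_pos_le_add fun ε hε hfin => ?_
    obtain ⟨m, hm⟩ := ENNReal.exists_inv_nat_lt
      (show (ε : ENNReal) ≠ 0 from ENNReal.coe_ne_zero.2 hε.ne')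
    have h1 : δ₀ - ((m : ENNReal) + 1)⁻¹ ≤ ρ.condKernel a {ω} := ha m ω hω
    have h2 : δ₀ ≤ ρ.condKernel a {ω} + ((m : ENNReal) + 1)⁻¹ := tsub_le_iff_right.1 h1
    calc δ₀ ≤ ρ.condKernel a {ω} + ((m : ENNReal) + 1)⁻¹ := h2
      _ ≤ ρ.condKernel a {ω} + (m : ENNReal)⁻¹ :=
          add_le_add le_rfl (ENNReal.inv_le_inv.2 (le_add_of_nonneg_right zero_le_one))
      _ ≤ ρ.condKernel a {ω} + ε := add_le_add le_rfl hm.le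
  -- carrier: a.e. a, non-atomic part is null
  have hcarrier : ∀ᵐ a ∂ρ.fst, ρ.condKernel a {ω | ρ.condKernel a {ω} = 0} = 0 := by
    have hcompl0 : ρ (E 0)ᶜ = 0 :=
      (prob_compl_eq_zero_iff₀ (hEmeas 0).nullMeasurableSet).2 hE0
    filter_upwards [hnullsec (E 0)ᶜ (hEmeas 0).compl hcompl0] with a ha
    have hceq : (Prod.mk a ⁻¹' (E 0)ᶜ) = {ω | ρ.condKernel a {ω} = 0} := by
      ext ω; simp [hEdef, hφdef, pos_iff_ne_zero]
    rwa [hceq] at ha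
  -- combine
  have hmain : ∀ᵐ a ∂ρ.fst,
      (∀ ω : Ω, ρ.condKernel a {ω} ≠ 0 → ρ.condKernel a {ω} = δ₀) ∧
      {ω : Ω | ρ.condKernel a {ω} ≠ 0}.Finite ∧
      ((({ω : Ω | ρ.condKernel a {ω} ≠ 0}.ncard : ENNReal)) * δ₀ = 1) := by
    filter_upwards [hub, hlb, hcarrier] with a h1 h2 h3
    set A : Set Ω := {ω | ρ.condKernel a {ω} ≠ 0} with hAdef
    have hAeq : ∀ ω ∈ A, ρ.condKernel a {ω} = δ₀ := fun ω hω => le_antisymm (h1 ω) (h2 ω hω)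
    have hsum : ∀ F : Finset Ω, ↑F ⊆ A → ρ.condKernel a ↑F = F.card * δ₀ := by
      intro F hF
      have hdisj : (↑F : Set Ω).PairwiseDisjoint (fun ω => ({ω} : Set Ω)) := by
        intro x _ y _ hxy
        simp [Set.disjoint_singleton_left, hxy]
      have := measure_biUnion_finset (μ := ρ.condKernel a) hdisj
        (fun ω _ => measurableSet_singleton ω)
      have hFeq : (⋃ b ∈ F, ({b} : Set Ω)) = (↑F : Set Ω) := by ext x; simp
      rw [hFeq] at this
      rw [this]
      calc (∑ ω ∈ F, ρ.condKernel a {ω}) = ∑ _ω ∈ F, δ₀ := by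
            apply Finset.sum_congr rfl
            intro ω hω
            exact hAeq ω (hF hω)
        _ = F.card * δ₀ := by rw [Finset.sum_const, nsmul_eq_mul]
    have hAfin : A.Finite := by
      by_contra hinf
      obtain ⟨m, hm⟩ := ENNReal.exists_nat_gt
        (show (1 / δ₀ : ENNReal) ≠ ⊤ by
          simp only [one_div, Ne, ENNReal.inv_eq_top]
          exact hδ₀ne0)
      have hm1 : 1 < (m : ENNReal) * δ₀ := by
        rw [← ENNReal.div_lt_iff (Or.inl hδ₀ne0) (Or.inl hδ₀ne_top)]
        exact hm
      have hinf' : A.Infinite := hinf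
      obtain ⟨F, hFsub, hFcard⟩ := hinf'.exists_subset_card_eq m
      have := hsum F hFsub
      rw [hFcard] at this
      have hle := measure_mono (μ := ρ.condKernel a) (Set.subset_univ (↑F : Set Ω))
      rw [this, measure_univ] at hle
      exact absurd hle (not_le.2 hm1)
    refine ⟨hAeq, hAfin, ?_⟩
    have hAmeas : MeasurableSet A := hAfin.measurableSet
    have hA1 : ρ.condKernel a A = 1 := by
      have := measure_add_measure_compl (μ := ρ.condKernel a) hAmeas
      have hAc : ρ.condKernel a Aᶜ = 0 := by
        have : Aᶜ = {ω | ρ.condKernel a {ω} = 0} := by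
          ext ω; simp [hAdef]
        rw [this]; exact h3
      rw [hAc, add_zero] at this
      rw [this]; simp
    have hAcard := hsum hAfin.toFinset (by simp)
    rw [Set.Finite.coe_toFinset, hA1] at hAcard
    rw [Set.ncard_eq_toFinset_card A hAfin]
    exact hAcard.symm
  -- extract k
  have hex : ∃ a : α, (∀ ω : Ω, ρ.condKernel a {ω} ≠ 0 → ρ.condKernel a {ω} = δ₀) ∧
      {ω : Ω | ρ.condKernel a {ω} ≠ 0}.Finite ∧
      ((({ω : Ω | ρ.condKernel a {ω} ≠ 0}.ncard : ENNReal)) * δ₀ = 1) := hmain.exists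
  obtain ⟨a₀, -, -, hk⟩ := hex
  set k : ℕ := {ω : Ω | ρ.condKernel a₀ {ω} ≠ 0}.ncard with hkdef
  have hkne0 : (k : ENNReal) ≠ 0 := by
    intro h0
    rw [h0, zero_mul] at hk
    exact zero_ne_one hk
  refine ⟨δ₀, hδ₀pos, k, ?_, ?_⟩
  · rw [ENNReal.eq_div_iff hkne0 (by simp)]
    exact hk
  · filter_upwards [hmain] with a ⟨ha1, ha2, ha3⟩
    refine ⟨ha1, ha2, ?_⟩
    have : (({ω : Ω | ρ.condKernel a {ω} ≠ 0}.ncard : ENNReal)) * δ₀ = (k : ENNReal) * δ₀ := by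
      rw [ha3, hk]
    have := (ENNReal.mul_left_inj hδ₀ne0 hδ₀ne_top).1 this
    exact_mod_cast this
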